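/- For every γ ∈ Γ one has α ∘ L_γ ∘ α = L_{φ(γ)} as maps G → G, and φ(γ) ∈ Γ. Consequently the set of bijections of G of the form L_γ or α ∘ L_γ with γ ∈ Γ is closed under composition and inversion, i.e., Π = Γ ∪ αΓ is a group of transformations of G. -/

import Mathlib

noncomputable section

/-- The underlying set of the nilpotent Lie group `G`: `ℝ⁶`. -/
abbrev G6 : Type := ℝ × ℝ × ℝ × ℝ × ℝ × ℝ

/-- The group multiplication on `G = ℝ⁶`. -/
def gmul (p q : G6) : G6 :=
  ⟨p.1 + q.1, p.2.1 + q.2.1, p.2.2.1 + q.2.2.1, p.2.2.2.1 + q.2.2.2.1,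
   p.2.2.2.2.1 + q.2.2.2.2.1 + p.1 * q.2.2.1 + p.2.1 * q.2.2.2.1,
   p.2.2.2.2.2 + q.2.2.2.2.2 + p.1 * q.2.2.2.1⟩

/-- The identity element of `G`. -/
def gid : G6 := ⟨0, 0, 0, 0, 0, 0⟩

/-- The inverse in `G`. -/
def ginv (p : G6) : G6 :=
  ⟨-p.1, -p.2.1, -p.2.2.1, -p.2.2.2.1,
   -p.2.2.2.2.1 + p.1 * p.2.2.1 + p.2.1 * p.2.2.2.1,
   -p.2.2.2.2.2 + p.1 * p.2.2.2.1⟩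

/-- Membership in the integer lattice `Γ = ℤ⁶ ⊂ G`. -/
def inGamma (p : G6) : Prop :=
  (∃ n : ℤ, p.1 = n) ∧ (∃ n : ℤ, p.2.1 = n) ∧ (∃ n : ℤ, p.2.2.1 = n) ∧
  (∃ n : ℤ, p.2.2.2.1 = n) ∧ (∃ n : ℤ, p.2.2.2.2.1 = n) ∧ (∃ n : ℤ, p.2.2.2.2.2 = n)

/-- Left translation by `g ∈ G`. -/
def Lt (g : G6) : G6 → G6 := fun h => gmul g h

/-- The family of maps `Φ_t`. -/
def Phi (t : ℝ) (p : G6) : G6 :=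
  ⟨p.1, p.2.1, p.2.2.1, p.2.2.2.1, p.2.2.2.2.1, p.2.2.2.2.2 + t * p.2.2.2.1⟩

/-- The automorphism `φ` negating the `y` and `z` coordinates. -/
def phi0 (p : G6) : G6 :=
  ⟨p.1, p.2.1, -p.2.2.1, -p.2.2.2.1, -p.2.2.2.2.1, -p.2.2.2.2.2⟩

/-- The affine map `α`. -/
def alphaMap (p : G6) : G6 :=
  ⟨p.1, p.2.1, -p.2.2.1, -p.2.2.2.1, -p.2.2.2.2.1, -p.2.2.2.2.2 + 1/2⟩

/-- The affine map `β`. -/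
def betaMap (p : G6) : G6 :=
  ⟨p.1, p.2.1, p.2.2.1, p.2.2.2.1, -p.2.2.2.2.1, p.2.2.2.2.2 + 1/2⟩

/-- The set of transformations `Π = Γ ∪ αΓ` of `G`. -/
def PiSet : Set (G6 → G6) :=
  {f | ∃ γ : G6, inGamma γ ∧ (f = Lt γ ∨ f = alphaMap ∘ Lt γ)}


section Aux

lemma conj_eq (γ : G6) : alphaMap ∘ Lt γ ∘ alphaMap = Lt (phi0 γ) := by
  funext p
  simp only [Function.comp, Lt, gmul, alphaMap, phi0, Prod.mk.injEq, true_and, and_true]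
  and_intros <;> ring

lemma alpha_invol : alphaMap ∘ alphaMap = id := by
  funext p
  simp only [Function.comp, alphaMap, id, Prod.mk.injEq]
  and_intros <;> ring

lemma Lt_comp_eq (γ δ : G6) : Lt γ ∘ Lt δ = Lt (gmul γ δ) := by
  funext p
  simp only [Function.comp, Lt, gmul, Prod.mk.injEq]
  and_intros <;> ring

lemma Lt_inv_right (γ : G6) : Lt γ ∘ Lt (ginv γ) = id := by
  funext p
  simp only [Function.comp, Lt, gmul, ginv, id, Prod.mk.injEq]
  and_intros <;> ring

lemma Lt_inv_left (γ : G6) : Lt (ginv γ) ∘ Lt γ = id := by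
  funext p
  simp only [Function.comp, Lt, gmul, ginv, id, Prod.mk.injEq]
  and_intros <;> ring

lemma phi0_ginv_phi0 (γ : G6) : phi0 (ginv (phi0 γ)) = ginv γ := by
  simp only [phi0, ginv, Prod.mk.injEq, true_and, and_true]
  and_intros <;> ring

lemma inGamma_phi0 {γ : G6} (h : inGamma γ) : inGamma (phi0 γ) := by
  obtain ⟨⟨a, ha⟩, ⟨b, hb⟩, ⟨c, hc⟩, ⟨d, hd⟩, ⟨e, he⟩, ⟨f, hf⟩⟩ := h
  exact ⟨⟨a, ha⟩, ⟨b, hb⟩, ⟨-c, by simp [phi0, hc]⟩, ⟨-d, by simp [phi0, hd]⟩,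
    ⟨-e, by simp [phi0, he]⟩, ⟨-f, by simp [phi0, hf]⟩⟩

lemma inGamma_gmul {γ δ : G6} (h : inGamma γ) (h' : inGamma δ) : inGamma (gmul γ δ) := by
  obtain ⟨⟨a, ha⟩, ⟨b, hb⟩, ⟨c, hc⟩, ⟨d, hd⟩, ⟨e, he⟩, ⟨f, hf⟩⟩ := h
  obtain ⟨⟨a', ha'⟩, ⟨b', hb'⟩, ⟨c', hc'⟩, ⟨d', hd'⟩, ⟨e', he'⟩, ⟨f', hf'⟩⟩ := h'
  refine ⟨⟨a + a', ?_⟩, ⟨b + b', ?_⟩, ⟨c + c', ?_⟩, ⟨d + d', ?_⟩,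
    ⟨e + e' + a * c' + b * d', ?_⟩, ⟨f + f' + a * d', ?_⟩⟩ <;>
    simp [gmul, ha, hb, hc, hd, he, hf, ha', hb', hc', hd', he', hf'] <;> push_cast <;> ring

lemma inGamma_ginv {γ : G6} (h : inGamma γ) : inGamma (ginv γ) := by
  obtain ⟨⟨a, ha⟩, ⟨b, hb⟩, ⟨c, hc⟩, ⟨d, hd⟩, ⟨e, he⟩, ⟨f, hf⟩⟩ := h
  refine ⟨⟨-a, ?_⟩, ⟨-b, ?_⟩, ⟨-c, ?_⟩, ⟨-d, ?_⟩, ⟨-e + a * c + b * d, ?_⟩,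
    ⟨-f + a * d, ?_⟩⟩ <;>
    simp [ginv, ha, hb, hc, hd, he, hf] <;> push_cast <;> ring

lemma Lt_comp_alpha (γ : G6) : Lt γ ∘ alphaMap = alphaMap ∘ Lt (phi0 γ) := by
  have h := conj_eq γ
  calc Lt γ ∘ alphaMap = (alphaMap ∘ alphaMap) ∘ Lt γ ∘ alphaMap := by
        rw [alpha_invol]; rfl
    _ = alphaMap ∘ (alphaMap ∘ Lt γ ∘ alphaMap) := by
        simp only [Function.comp_assoc]
    _ = alphaMap ∘ Lt (phi0 γ) := by rw [h]

end Aux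

/-- for `γ ∈ Γ`, `α ∘ L_γ ∘ α = L_{φ(γ)}` with `φ(γ) ∈ Γ`; consequently
`Π = Γ ∪ αΓ` is closed under composition and inversion, i.e. it is a group of
transformations of `G`. -/
theorem stmt11 :
    (∀ γ : G6, inGamma γ →
      alphaMap ∘ Lt γ ∘ alphaMap = Lt (phi0 γ) ∧ inGamma (phi0 γ)) ∧
    (∀ f g : G6 → G6, f ∈ PiSet → g ∈ PiSet → f ∘ g ∈ PiSet) ∧
    (∀ f : G6 → G6, f ∈ PiSet → ∃ g ∈ PiSet, f ∘ g = id ∧ g ∘ f = id) := by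
  refine ⟨fun γ hγ => ⟨conj_eq γ, inGamma_phi0 hγ⟩, ?_, ?_⟩
  · rintro f g ⟨γ, hγ, hf | hf⟩ ⟨δ, hδ, hg | hg⟩ <;> subst hf <;> subst hg
    · exact ⟨gmul γ δ, inGamma_gmul hγ hδ, Or.inl (Lt_comp_eq γ δ)⟩
    · refine ⟨gmul (phi0 γ) δ, inGamma_gmul (inGamma_phi0 hγ) hδ, Or.inr ?_⟩
      calc Lt γ ∘ alphaMap ∘ Lt δ = (Lt γ ∘ alphaMap) ∘ Lt δ := by rfl
        _ = (alphaMap ∘ Lt (phi0 γ)) ∘ Lt δ := by rw [Lt_comp_alpha]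
        _ = alphaMap ∘ (Lt (phi0 γ) ∘ Lt δ) := by rfl
        _ = alphaMap ∘ Lt (gmul (phi0 γ) δ) := by rw [Lt_comp_eq]
    · exact ⟨gmul γ δ, inGamma_gmul hγ hδ, Or.inr (by
        calc (alphaMap ∘ Lt γ) ∘ Lt δ = alphaMap ∘ (Lt γ ∘ Lt δ) := by rfl
          _ = alphaMap ∘ Lt (gmul γ δ) := by rw [Lt_comp_eq])⟩
    · refine ⟨gmul (phi0 γ) δ, inGamma_gmul (inGamma_phi0 hγ) hδ, Or.inl ?_⟩
      calc (alphaMap ∘ Lt γ) ∘ alphaMap ∘ Lt δ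
          = (alphaMap ∘ Lt γ ∘ alphaMap) ∘ Lt δ := by rfl
        _ = Lt (phi0 γ) ∘ Lt δ := by rw [conj_eq]
        _ = Lt (gmul (phi0 γ) δ) := Lt_comp_eq _ _
  · rintro f ⟨γ, hγ, hf | hf⟩ <;> subst hf
    · exact ⟨Lt (ginv γ), ⟨ginv γ, inGamma_ginv hγ, Or.inl rfl⟩,
        Lt_inv_right γ, Lt_inv_left γ⟩
    · refine ⟨alphaMap ∘ Lt (ginv (phi0 γ)),
        ⟨ginv (phi0 γ), inGamma_ginv (inGamma_phi0 hγ), Or.inr rfl⟩, ?_, ?_⟩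
      · calc (alphaMap ∘ Lt γ) ∘ alphaMap ∘ Lt (ginv (phi0 γ))
            = (alphaMap ∘ Lt γ ∘ alphaMap) ∘ Lt (ginv (phi0 γ)) := by rfl
          _ = Lt (phi0 γ) ∘ Lt (ginv (phi0 γ)) := by rw [conj_eq]
          _ = id := Lt_inv_right _
      · calc (alphaMap ∘ Lt (ginv (phi0 γ))) ∘ alphaMap ∘ Lt γ
            = (alphaMap ∘ Lt (ginv (phi0 γ)) ∘ alphaMap) ∘ Lt γ := by rfl
          _ = Lt (phi0 (ginv (phi0 γ))) ∘ Lt γ := by rw [conj_eq]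
          _ = Lt (ginv γ) ∘ Lt γ := by rw [phi0_ginv_phi0]
          _ = id := Lt_inv_left _
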